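/- Let n ≥ 2 and fix pairs (i,j) and (i′,j′) with 1 ≤ i, j, i′, j′ ≤ n, i ≠ j, and i′ ≠ j′. Let w_{ij} be the permutation of {1,…,n} with w_{ij}(i) = 1, w_{ij}(j) = n, and remaining values n−1, n−2, …, 2 placed in decreasing order at the remaining positions read left to right, and define w_{i′j′} analogously. Then ℓ(w_{ij}) = ℓ(w_{i′j′}) if and only if j − i = j′ − i′. -/

import Mathlib

open Matrix

noncomputable section

/-- The length of a permutation: its number of inversions. -/
def invLen {n : ℕ} (w : Equiv.Perm (Fin n)) : ℕ :=
  (Finset.univ.filter (fun p : Fin n × Fin n => p.1 < p.2 ∧ w p.2 < w p.1)).card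

def IsTransposition {n : ℕ} (t : Equiv.Perm (Fin n)) : Prop :=
  ∃ a b : Fin n, a ≠ b ∧ t = Equiv.swap a b

/-- `BruhatCovers w v` means `w` covers `v` in the Bruhat order:
`v = w·t` for some transposition `t` and `ℓ(v) = ℓ(w) − 1`. -/
def BruhatCovers {n : ℕ} (w v : Equiv.Perm (Fin n)) : Prop :=
  (∃ t, IsTransposition t ∧ v = w * t) ∧ invLen v + 1 = invLen w

/-- The Bruhat order: reflexive–transitive closure of the covering relation. -/
def BruhatLE {n : ℕ} (v w : Equiv.Perm (Fin n)) : Prop :=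
  Relation.ReflTransGen (fun x y => BruhatCovers y x) v w

def BruhatLT {n : ℕ} (v w : Equiv.Perm (Fin n)) : Prop :=
  BruhatLE v w ∧ v ≠ w

/-- The matrix unit `E_{kl}`. -/
def stdE (n : ℕ) (k l : Fin n) : Matrix (Fin n) (Fin n) ℂ := Matrix.single k l 1

/-- The permutation matrix of `σ`: entry `(k,l)` is `1` iff `k = σ(l)`. -/
def permMat {n : ℕ} (σ : Equiv.Perm (Fin n)) : Matrix (Fin n) (Fin n) ℂ :=
  Matrix.of fun k l => if k = σ l then 1 else 0

/-- The Hessenberg space of a (1-based) Hessenberg function `h`: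
matrices `M` with `M_{kl} = 0` whenever `k > h(l)`.  Row index `k : Fin n`
corresponds to the 1-based row `(k : ℕ) + 1`. -/
def HessSpace {n : ℕ} (h : Fin n → ℕ) : Set (Matrix (Fin n) (Fin n) ℂ) :=
  {M | ∀ k l : Fin n, h l < (k : ℕ) + 1 → M k l = 0}

/-- The span `H_{ij}` of the matrix units `E_{kl}` with `k ≤ i` and `l ≥ j`
(`i`, `j`, `k`, `l` all 1-based): matrices vanishing outside the
upper-right `i × (n−j+1)` rectangle. -/
def Hrect (n i j : ℕ) : Set (Matrix (Fin n) (Fin n) ℂ) :=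
  {M | ∀ k l : Fin n, ¬((k : ℕ) + 1 ≤ i ∧ j ≤ (l : ℕ) + 1) → M k l = 0}

open Finset in
lemma key_count (n : ℕ) (hn : 2 ≤ n) (a b : Fin n) (hab : a ≠ b)
    (w : Equiv.Perm (Fin n)) (hwa : w a = ⟨0, by omega⟩) (hwb : w b = ⟨n - 1, by omega⟩)
    (hdec : ∀ p q : Fin n, p ≠ a → p ≠ b → q ≠ a → q ≠ b → p < q → w q < w p) :
    invLen w + ((n - 1) - a.val) + b.val =
      (Finset.univ.filter (fun p : Fin n × Fin n => p.1 < p.2)).card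
        + (if a < b then 1 else 0) := by
  classical
  set P : Finset (Fin n × Fin n) := Finset.univ.filter (fun p => p.1 < p.2) with hP
  have hstep1 : invLen w = (P.filter (fun p => p.1 ≠ a ∧ p.2 ≠ b)).card := by
    unfold invLen
    rw [hP, Finset.filter_filter]
    congr 1
    apply Finset.filter_congr
    intro p _
    constructor
    · rintro ⟨hlt, hinv⟩
      refine ⟨hlt, ?_, ?_⟩
      · rintro rfl
        rw [hwa] at hinv
        exact absurd (hinv : (w p.2).val < 0) (Nat.not_lt_zero _)
      · rintro rfl
        rw [hwb] at hinv
        have h1 : n - 1 < (w p.1).val := hinv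
        have h2 := (w p.1).isLt
        omega
    · rintro ⟨hlt, hpa, hqb⟩
      refine ⟨hlt, ?_⟩
      by_cases hqa : p.2 = a
      · subst hqa
        rw [hwa]
        have hne : w p.1 ≠ w p.2 := fun h => hpa (w.injective h)
        rw [hwa] at hne
        have h2 : (w p.1).val ≠ 0 := fun h => hne (Fin.ext h)
        show 0 < (w p.1).val
        omega
      · by_cases hpb : p.1 = b
        · subst hpb
          rw [hwb]
          have hne : w p.2 ≠ w p.1 := fun h => hqb (w.injective h)
          rw [hwb] at hne
          have h2 : (w p.2).val ≠ n - 1 := fun h => hne (Fin.ext h)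
          have h3 := (w p.2).isLt
          show (w p.2).val < n - 1
          omega
        · exact hdec p.1 p.2 hpa hpb hqa hqb hlt
  set A : Finset (Fin n × Fin n) := P.filter (fun p => p.1 = a) with hA
  set B : Finset (Fin n × Fin n) := P.filter (fun p => p.2 = b) with hB
  have hT : P.filter (fun p => p.1 ≠ a ∧ p.2 ≠ b) = P \ (A ∪ B) := by
    ext p
    simp [hA, hB, hP]
    tauto
  have hsub : A ∪ B ⊆ P := by
    apply Finset.union_subset <;> exact Finset.filter_subset _ _
  have hcard1 : (P \ (A ∪ B)).card + (A ∪ B).card = P.card :=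
    Finset.card_sdiff_add_card_eq_card hsub
  have hcard2 : (A ∪ B).card + (A ∩ B).card = A.card + B.card :=
    Finset.card_union_add_card_inter A B
  have hcardA : A.card = (n - 1) - a.val := by
    have : A = {a} ×ˢ Finset.Ioi a := by
      ext ⟨p1, p2⟩
      simp only [hA, hP, Finset.mem_filter, Finset.mem_univ, true_and,
        Finset.mem_product, Finset.mem_singleton, Finset.mem_Ioi]
      constructor
      · rintro ⟨h1, rfl⟩; exact ⟨rfl, h1⟩
      · rintro ⟨rfl, h1⟩; exact ⟨h1, rfl⟩
    rw [this, Finset.card_product, Finset.card_singleton, Fin.card_Ioi, one_mul]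
  have hcardB : B.card = b.val := by
    have : B = Finset.Iio b ×ˢ {b} := by
      ext ⟨p1, p2⟩
      simp only [hB, hP, Finset.mem_filter, Finset.mem_univ, true_and,
        Finset.mem_product, Finset.mem_singleton, Finset.mem_Iio]
      constructor
      · rintro ⟨h1, rfl⟩; exact ⟨h1, rfl⟩
      · rintro ⟨h1, rfl⟩; exact ⟨h1, rfl⟩
    rw [this, Finset.card_product, Finset.card_singleton, Fin.card_Iio, mul_one]
  have hcardI : (A ∩ B).card = if a < b then 1 else 0 := by
    by_cases hab' : a < b
    · have : A ∩ B = {(a, b)} := by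
        ext ⟨p1, p2⟩
        simp only [hA, hB, hP, Finset.mem_inter, Finset.mem_filter, Finset.mem_univ,
          true_and, Finset.mem_singleton, Prod.mk.injEq]
        constructor
        · rintro ⟨⟨_, rfl⟩, _, rfl⟩; exact ⟨rfl, rfl⟩
        · rintro ⟨rfl, rfl⟩; exact ⟨⟨hab', rfl⟩, hab', rfl⟩
      simp [this, hab']
    · have : A ∩ B = ∅ := by
        apply Finset.eq_empty_of_forall_notMem
        rintro ⟨p1, p2⟩ hp
        simp only [hA, hB, hP, Finset.mem_inter, Finset.mem_filter, Finset.mem_univ,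
          true_and] at hp
        obtain ⟨⟨hlt, h1⟩, -, h2⟩ := hp
        subst h1; subst h2
        exact hab' hlt
      simp [this, hab']
  rw [hstep1, hT]
  omega

/-- with `w_{ij}` and `w_{i′j′}` as above,
`ℓ(w_{ij}) = ℓ(w_{i′j′})` iff `j − i = j′ − i′` (as integers). -/
theorem stmt13 (n : ℕ) (hn : 2 ≤ n) (i j i' j' : ℕ)
    (hi1 : 1 ≤ i) (hin : i ≤ n) (hj1 : 1 ≤ j) (hjn : j ≤ n)
    (hi'1 : 1 ≤ i') (hi'n : i' ≤ n) (hj'1 : 1 ≤ j') (hj'n : j' ≤ n)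
    (hij : i ≠ j) (hij' : i' ≠ j')
    (w : Equiv.Perm (Fin n))
    (hwi : w ⟨i - 1, by omega⟩ = ⟨0, by omega⟩)
    (hwj : w ⟨j - 1, by omega⟩ = ⟨n - 1, by omega⟩)
    (hdec : ∀ p q : Fin n, p ≠ ⟨i - 1, by omega⟩ → p ≠ ⟨j - 1, by omega⟩ →
      q ≠ ⟨i - 1, by omega⟩ → q ≠ ⟨j - 1, by omega⟩ → p < q → w q < w p)
    (w' : Equiv.Perm (Fin n))
    (hwi' : w' ⟨i' - 1, by omega⟩ = ⟨0, by omega⟩)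
    (hwj' : w' ⟨j' - 1, by omega⟩ = ⟨n - 1, by omega⟩)
    (hdec' : ∀ p q : Fin n, p ≠ ⟨i' - 1, by omega⟩ → p ≠ ⟨j' - 1, by omega⟩ →
      q ≠ ⟨i' - 1, by omega⟩ → q ≠ ⟨j' - 1, by omega⟩ → p < q → w' q < w' p) :
    invLen w = invLen w' ↔ (j : ℤ) - (i : ℤ) = (j' : ℤ) - (i' : ℤ) := by
  have h1 := key_count n hn ⟨i - 1, by omega⟩ ⟨j - 1, by omega⟩
    (by simp only [ne_eq, Fin.mk.injEq]; omega) w hwi hwj hdec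
  have h2 := key_count n hn ⟨i' - 1, by omega⟩ ⟨j' - 1, by omega⟩
    (by simp only [ne_eq, Fin.mk.injEq]; omega) w' hwi' hwj' hdec'
  simp only [Fin.mk_lt_mk, Fin.val_mk] at h1 h2
  split_ifs at h1 h2 <;> omega
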